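/- In the setting of the T_s*-extension: let g be a Lie algebra and φ : g* × g* → g a symmetric bilinear map satisfying conditions (1) and (2) above, and additionally the cyclic condition h(φ(f,g)) = f(φ(g,h)) for all f,g,h ∈ g*. Then the odd bilinear form B̄ on ḡ = g ⊕ g* defined by B̄(X+f, Y+g) = f(Y) + g(X) is non-degenerate, supersymmetric, and invariant, so (ḡ, B̄) is an odd quadratic Lie superalgebra. -/
import Mathlib


/-- If the symmetric bilinear map `φ` of the `T_s*`-extension moreover
satisfies the cyclic condition `h(φ(f,g)) = f(φ(g,h))`, then the odd bilinear form
`B̄(X+f, Y+g) = f(Y) + g(X)` on `ḡ = g ⊕ g*` is non-degenerate, supersymmetric and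
invariant, so `(ḡ, B̄)` is an odd quadratic Lie superalgebra.  Elements are encoded as
pairs `(X, f)`; `(X, 0)` is even and `(0, f)` is odd. -/
theorem stmt_18 (L : Type*) [LieRing L] [LieAlgebra ℂ L] [FiniteDimensional ℂ L]
    (φ : Module.Dual ℂ L → Module.Dual ℂ L → L)
    (hφsymm : ∀ f g, φ f g = φ g f)
    (hφlin : ∀ (a : ℂ) (f f' g), φ (a • f + f') g = a • φ f g + φ f' g)
    (h1 : ∀ (X : L) (f g : Module.Dual ℂ L),
      ⁅X, φ f g⁆ + φ f (g.comp (LieAlgebra.ad ℂ L X)) +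
        φ g (f.comp (LieAlgebra.ad ℂ L X)) = 0)
    (h2 : ∀ (f g h : Module.Dual ℂ L) (w : L),
      f ⁅φ g h, w⁆ + g ⁅φ h f, w⁆ + h ⁅φ f g, w⁆ = 0)
    (hcyclic : ∀ f g h : Module.Dual ℂ L, h (φ f g) = f (φ g h))
    (br : L × Module.Dual ℂ L → L × Module.Dual ℂ L → L × Module.Dual ℂ L)
    (hbr1 : ∀ u v, (br u v).1 = ⁅u.1, v.1⁆ + φ u.2 v.2)
    (hbr2 : ∀ u v (w : L), (br u v).2 w = - v.2 ⁅u.1, w⁆ + u.2 ⁅v.1, w⁆)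
    (Bb : L × Module.Dual ℂ L → L × Module.Dual ℂ L → ℂ)
    (hBb : ∀ u v, Bb u v = u.2 v.1 + v.2 u.1) :
    -- B̄ is odd: it vanishes on even × even and on odd × odd
    (∀ u v, u.2 = 0 → v.2 = 0 → Bb u v = 0) ∧
    (∀ u v, u.1 = 0 → v.1 = 0 → Bb u v = 0) ∧
    -- supersymmetric
    (∀ u v, (u.2 = 0 ∨ v.2 = 0) → Bb u v = Bb v u) ∧
    (∀ u v, u.1 = 0 → v.1 = 0 → Bb u v = - Bb v u) ∧
    -- non-degenerate
    (∀ u, (∀ v, Bb u v = 0) → u = 0) ∧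
    -- invariant
    (∀ u v w, Bb (br u v) w = Bb u (br v w)) := by
  refine ⟨?_, ?_, ?_, ?_, ?_, ?_⟩
  · intro u v hu hv; simp [hBb, hu, hv]
  · intro u v hu hv; simp [hBb, hu, hv]
  · intro u v _; simp [hBb]; ring
  · intro u v hu hv; simp [hBb, hu, hv]
  · intro u hu
    have h1 : u.1 = 0 := by
      have : ∀ f : Module.Dual ℂ L, f u.1 = 0 := by
        intro f
        have := hu (0, f)
        simpa [hBb] using this
      exact (Module.forall_dual_apply_eq_zero_iff ℂ u.1).mp this
    have h2 : u.2 = 0 := by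
      ext Y
      have := hu (Y, 0)
      simpa [hBb] using this
    exact Prod.ext h1 h2
  · intro u v w
    rw [hBb, hBb, hbr1, hbr1, hbr2, hbr2]
    simp only [map_add]
    have c := hcyclic u.2 v.2 w.2
    have a1 : v.2 ⁅w.1, u.1⁆ = - v.2 ⁅u.1, w.1⁆ := by rw [← lie_skew, map_neg]
    have a2 : w.2 ⁅u.1, v.1⁆ = - w.2 ⁅v.1, u.1⁆ := by rw [← lie_skew, map_neg]
    rw [a1, a2, c]
    ring
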